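/- Let n ≥ 1 and let G be a real n×n matrix with zero diagonal all of whose off-diagonal entries are nonpositive (a game of strategic complements). Then the public-good provision game with parameters (G, q) has at least one Nash equilibrium for every q ∈ ℝⁿ if and only if the spectral radius of G is strictly less than 1, i.e., every complex eigenvalue of G has modulus < 1. -/

import Mathlib

open Matrix Finset

/-- Nash equilibrium of the public-good provision game with parameters `(G, q)`. -/
def NashEq {n : ℕ} (G : Matrix (Fin n) (Fin n) ℝ) (q x : Fin n → ℝ) : Prop :=
  ∀ i, x i = max 0 (q i - ∑ j ∈ Finset.univ.erase i, G i j * x j)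

/-- `μ ∈ ℂ` is an eigenvalue of the real matrix `G` viewed as a complex matrix. -/
def HasComplexEigenvalue {n : ℕ} (G : Matrix (Fin n) (Fin n) ℝ) (μ : ℂ) : Prop :=
  ∃ v : Fin n → ℂ, v ≠ 0 ∧ (G.map (Complex.ofReal)).mulVec v = μ • v

open Filter

lemma transpose_eig {n : ℕ} (G : Matrix (Fin n) (Fin n) ℝ) (μ : ℂ)
    (h : HasComplexEigenvalue G μ) : HasComplexEigenvalue Gᵀ μ := by
  obtain ⟨v, hv, hGv⟩ := h
  have hdet : ((G.map (Complex.ofReal)) - μ • 1).det = 0 := by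
    refine Matrix.exists_mulVec_eq_zero_iff.mp ⟨v, hv, ?_⟩
    rw [Matrix.sub_mulVec, hGv, Matrix.smul_mulVec, Matrix.one_mulVec, sub_self]
  have hdetT : ((Gᵀ.map (Complex.ofReal)) - μ • 1).det = 0 := by
    have : (Gᵀ.map (Complex.ofReal)) - μ • 1 = ((G.map (Complex.ofReal)) - μ • 1)ᵀ := by
      rw [Matrix.transpose_sub, Matrix.transpose_smul, Matrix.transpose_one, Matrix.transpose_map]
    rw [this, Matrix.det_transpose, hdet]
  obtain ⟨w, hw, hww⟩ := Matrix.exists_mulVec_eq_zero_iff.mpr hdetT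
  refine ⟨w, hw, ?_⟩
  rwa [Matrix.sub_mulVec, Matrix.smul_mulVec, Matrix.one_mulVec, sub_eq_zero] at hww

lemma forward_dir {n : ℕ} (G : Matrix (Fin n) (Fin n) ℝ) (hdiag : ∀ i, G i i = 0)
    (hcomp : ∀ i j, i ≠ j → G i j ≤ 0)
    (hex : ∀ q : Fin n → ℝ, ∃ x : Fin n → ℝ, NashEq G q x)
    (μ : ℂ) (hμ : HasComplexEigenvalue G μ) : ‖μ‖ < 1 := by
  by_contra hc
  push_neg at hc
  obtain ⟨w, hw, hwe⟩ := transpose_eig G μ hμ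
  set u : Fin n → ℝ := fun i => ‖w i‖ with hu
  have hu0 : ∀ i, 0 ≤ u i := fun i => (norm_nonneg _)
  have habs : ∀ i j, |G i j| = -G i j := by
    intro i j
    rcases eq_or_ne i j with rfl | hne
    · simp [hdiag i]
    · rw [abs_of_nonpos (hcomp i j hne)]
  have key : ∀ j, u j ≤ ∑ i, (-G i j) * u i := by
    intro j
    have h1 : (∑ i, ((G i j : ℂ) * w i)) = μ * w j := by
      have := congrFun hwe j
      simpa [Matrix.mulVec, dotProduct, Matrix.transpose_apply, Matrix.map_apply] using this
    calc u j ≤ ‖μ‖ * u j := le_mul_of_one_le_left (hu0 j) hc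
      _ = ‖∑ i, ((G i j : ℂ) * w i)‖ := by rw [h1, norm_mul]
      _ ≤ ∑ i, ‖(G i j : ℂ) * w i‖ := norm_sum_le _ _
      _ = ∑ i, (-G i j) * u i := by
          refine Finset.sum_congr rfl fun i _ => ?_
          rw [norm_mul, Complex.norm_real, Real.norm_eq_abs, habs i j]
  obtain ⟨x, hx⟩ := hex (fun _ => 1)
  have hx0 : ∀ i, 0 ≤ x i := fun i => (hx i) ▸ le_max_left _ _
  have hx1 : ∀ i, (1 : ℝ) ≤ x i + ∑ j, G i j * x j := by
    intro i
    have h2 : x i ≥ 1 - ∑ j ∈ Finset.univ.erase i, G i j * x j := (hx i) ▸ le_max_right _ _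
    have h3 : ∑ j ∈ Finset.univ.erase i, G i j * x j = ∑ j, G i j * x j :=
      Finset.sum_erase _ (by simp [hdiag i])
    rw [h3] at h2; linarith
  have hupos : 0 < ∑ i, u i := by
    have : ∃ i, w i ≠ 0 := by
      by_contra hall; push_neg at hall; exact hw (funext fun i => hall i)
    obtain ⟨i, hi⟩ := this
    have : 0 < u i := by simpa [hu] using norm_pos_iff.mpr hi
    exact Finset.sum_pos' (fun i _ => hu0 i) ⟨i, Finset.mem_univ i, this⟩
  have main : ∑ i, u i ≤ 0 := by
    have step1 : ∑ i, u i ≤ ∑ i, u i * (x i + ∑ j, G i j * x j) := by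
      refine Finset.sum_le_sum fun i _ => ?_
      calc u i = u i * 1 := (mul_one _).symm
        _ ≤ u i * (x i + ∑ j, G i j * x j) := mul_le_mul_of_nonneg_left (hx1 i) (hu0 i)
    have step2 : ∑ i, u i * (x i + ∑ j, G i j * x j)
        = ∑ i, u i * x i + ∑ j, (∑ i, u i * G i j) * x j := by
      have e1 : ∀ i, u i * (x i + ∑ j, G i j * x j)
          = u i * x i + ∑ j, u i * G i j * x j := by
        intro i
        rw [mul_add, Finset.mul_sum]
        congr 1
        exact Finset.sum_congr rfl fun j _ => by ring
      simp_rw [e1]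
      rw [Finset.sum_add_distrib]
      congr 1
      rw [Finset.sum_comm]
      exact Finset.sum_congr rfl fun j _ => (Finset.sum_mul _ _ _).symm
    have step3 : ∀ j, (∑ i, u i * G i j) * x j ≤ -(u j * x j) := by
      intro j
      have h4 : (∑ i, u i * G i j) ≤ -u j := by
        have := key j
        have h5 : ∑ i, (-G i j) * u i = -∑ i, u i * G i j := by
          rw [← Finset.sum_neg_distrib]
          exact Finset.sum_congr rfl fun i _ => by ring
        rw [h5] at this; linarith
      calc (∑ i, u i * G i j) * x j ≤ (-u j) * x j :=
            mul_le_mul_of_nonneg_right h4 (hx0 j)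
        _ = -(u j * x j) := by ring
    have step4 : ∑ j, (∑ i, u i * G i j) * x j ≤ ∑ j, -(u j * x j) :=
      Finset.sum_le_sum fun j _ => step3 j
    have : ∑ j, -(u j * x j) = -∑ j, u j * x j := by rw [Finset.sum_neg_distrib]
    rw [this] at step4
    calc ∑ i, u i ≤ ∑ i, u i * x i + ∑ j, (∑ i, u i * G i j) * x j := step2 ▸ step1
      _ ≤ ∑ i, u i * x i + -∑ j, u j * x j := by linarith
      _ = 0 := by ring
  linarith

lemma spec_to_eig {n : ℕ} (B : Matrix (Fin n) (Fin n) ℝ) (μ : ℂ)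
    (h : μ ∈ spectrum ℂ (B.map Complex.ofReal)) : HasComplexEigenvalue B μ := by
  rw [spectrum.mem_iff] at h
  have hdet : (μ • (1 : Matrix (Fin n) (Fin n) ℂ) - B.map Complex.ofReal).det = 0 := by
    by_contra hne
    exact h (by
      rw [Algebra.algebraMap_eq_smul_one]
      exact (Matrix.isUnit_iff_isUnit_det _).mpr (isUnit_iff_ne_zero.mpr hne))
  obtain ⟨v, hv, hvv⟩ := Matrix.exists_mulVec_eq_zero_iff.mpr hdet
  refine ⟨v, hv, ?_⟩
  rw [Matrix.sub_mulVec, Matrix.smul_mulVec, Matrix.one_mulVec, sub_eq_zero] at hvv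
  exact hvv.symm

open scoped ENNReal NNReal

set_option maxHeartbeats 1000000 in
lemma exists_supersolution {n : ℕ} (hn : 1 ≤ n) (G : Matrix (Fin n) (Fin n) ℝ)
    (hG : ∀ i j, G i j ≤ 0)
    (heig : ∀ μ : ℂ, HasComplexEigenvalue G μ → ‖μ‖ < 1)
    (w : Fin n → ℝ) (hw : ∀ i, 0 ≤ w i) :
    ∃ z : Fin n → ℝ, (∀ i, 0 ≤ z i) ∧ ∀ i, z i = w i + ∑ j, (-G i j) * z j := by
  haveI : Nonempty (Fin n) := ⟨⟨0, hn⟩⟩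
  letI : SeminormedAddCommGroup (Matrix (Fin n) (Fin n) ℝ) :=
    Matrix.linftyOpSeminormedAddCommGroup
  letI : SeminormedRing (Matrix (Fin n) (Fin n) ℂ) := Matrix.linftyOpSemiNormedRing
  letI : NormedRing (Matrix (Fin n) (Fin n) ℂ) := Matrix.linftyOpNormedRing
  letI : NormedAlgebra ℂ (Matrix (Fin n) (Fin n) ℂ) := Matrix.linftyOpNormedAlgebra
  haveI : CompleteSpace (Matrix (Fin n) (Fin n) ℂ) := FiniteDimensional.complete ℂ _
  set A : Matrix (Fin n) (Fin n) ℝ := -G with hA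
  set M : Matrix (Fin n) (Fin n) ℂ := A.map Complex.ofReal with hM
  -- spectral radius of M is < 1
  have hρ : spectralRadius ℂ M < 1 := by
    obtain ⟨z, hz, hze⟩ := spectrum.exists_nnnorm_eq_spectralRadius (a := M)
    rw [← hze]
    have h1 : HasComplexEigenvalue (-G) z := spec_to_eig (-G) z hz
    have h2 : ‖z‖ < 1 := by
      obtain ⟨v, hv, hvv⟩ := h1
      have : (G.map Complex.ofReal).mulVec v = (-z) • v := by
        have : ((-G).map Complex.ofReal) = -(G.map Complex.ofReal) := by
          ext i j; simp [Matrix.map_apply]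
        rw [this, Matrix.neg_mulVec] at hvv
        rw [neg_smul, ← hvv, neg_neg]
      have := heig (-z) ⟨v, hv, this⟩
      simpa using this
    rw [ENNReal.coe_lt_one_iff, ← NNReal.coe_lt_one, coe_nnnorm]; exact h2
  -- Gelfand's formula gives geometric decay
  obtain ⟨r, hr1, hr2⟩ := exists_between hρ
  have hrtop : r ≠ ⊤ := (hr2.trans ENNReal.one_lt_top).ne
  set r' : ℝ≥0 := r.toNNReal with hr'
  have hrr' : r = (r' : ℝ≥0∞) := (ENNReal.coe_toNNReal hrtop).symm
  have hr'1 : (r' : ℝ) < 1 := by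
    rw [hrr'] at hr2
    exact_mod_cast hr2
  have hge := spectrum.pow_nnnorm_pow_one_div_tendsto_nhds_spectralRadius M
  have hev : ∀ᶠ k : ℕ in atTop, (‖M ^ k‖₊ : ℝ≥0∞) ^ (1/(k:ℝ)) < r :=
    hge.eventually_lt_const hr1
  obtain ⟨N, hN⟩ := eventually_atTop.mp hev
  have hbound : ∀ k, N + 1 ≤ k → ‖M ^ k‖₊ ≤ r' ^ k := by
    intro k hk
    have hk1 : 1 ≤ k := le_trans (Nat.le_add_left 1 N) hk
    have h := hN k (le_trans (Nat.le_add_right N 1) hk)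
    have hkne : (k:ℝ) ≠ 0 := Nat.cast_ne_zero.mpr (Nat.one_le_iff_ne_zero.mp hk1)
    have heq : ((‖M ^ k‖₊ : ℝ≥0∞) ^ (1/(k:ℝ))) ^ (k:ℝ) = (‖M ^ k‖₊ : ℝ≥0∞) := by
      rw [← ENNReal.rpow_mul, one_div_mul_cancel hkne, ENNReal.rpow_one]
    have h2 : (‖M ^ k‖₊ : ℝ≥0∞) ≤ r ^ (k:ℝ) :=
      heq ▸ ENNReal.rpow_le_rpow h.le (Nat.cast_nonneg k)
    rw [hrr', ← ENNReal.coe_rpow_of_nonneg _ (Nat.cast_nonneg k), ENNReal.coe_le_coe,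
      NNReal.rpow_natCast] at h2
    exact h2
  -- bridge to real matrices
  have hbridge : ∀ k : ℕ, ‖A ^ k‖₊ = ‖M ^ k‖₊ := by
    intro k
    have hmp : M ^ k = (A ^ k).map Complex.ofReal := by
      have := map_pow (Complex.ofRealHom.mapMatrix) A k
      simp only [RingHom.mapMatrix_apply] at this; exact this.symm
    rw [hmp, Matrix.linfty_opNNNorm_def, Matrix.linfty_opNNNorm_def]
    refine congrArg (Finset.sup Finset.univ) (funext fun i => ?_)
    refine Finset.sum_congr rfl fun j _ => Subtype.ext ?_
    simp [Matrix.map_apply, Complex.norm_real, Real.norm_eq_abs]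
  -- summability
  set F : ℕ → (Fin n → ℝ) := fun k => (A ^ k) *ᵥ w with hF
  have hsum : Summable F := by
    apply Summable.of_norm
    rw [← summable_nat_add_iff (N+1)]
    apply Summable.of_nonneg_of_le (fun m => norm_nonneg _)
      (f := fun m => (‖w‖ * (r':ℝ) ^ (N+1)) * (r':ℝ) ^ m)
    · intro m
      calc ‖F (m + (N+1))‖ ≤ ‖A ^ (m + (N+1))‖ * ‖w‖ :=
            Matrix.linfty_opNorm_mulVec _ _
        _ ≤ ((r' : ℝ) ^ (m + (N+1))) * ‖w‖ := by
            apply mul_le_mul_of_nonneg_right _ (norm_nonneg w)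
            have := hbound (m + (N+1)) (Nat.le_add_left _ _)
            rw [← hbridge] at this
            calc ‖A ^ (m + (N+1))‖ = ((‖A ^ (m + (N+1))‖₊ : ℝ≥0) : ℝ) := rfl
              _ ≤ (((r' ^ (m + (N+1)) : ℝ≥0)) : ℝ) := by exact_mod_cast this
              _ = (r' : ℝ) ^ (m + (N+1)) := by push_cast; ring
        _ = (‖w‖ * (r':ℝ) ^ (N+1)) * (r':ℝ) ^ m := by rw [pow_add]; ring
    · exact (summable_geometric_of_lt_one r'.2 hr'1).mul_left _
  -- the candidate supersolution
  set z : Fin n → ℝ := ∑' k, F k with hz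
  have hAk : ∀ (k : ℕ) i j, 0 ≤ (A ^ k) i j := by
    intro k
    induction k with
    | zero => intro i j; by_cases hij : i = j <;> simp [Matrix.one_apply, hij]
    | succ m ih =>
        intro i j
        rw [pow_succ, Matrix.mul_apply]
        refine Finset.sum_nonneg fun l _ => mul_nonneg (ih i l) ?_
        rw [hA, Matrix.neg_apply]
        exact neg_nonneg.mpr (hG l j)
  have hF0 : ∀ k i, 0 ≤ F k i := by
    intro k i
    have : F k i = ∑ j, (A ^ k) i j * w j := by
      simp [hF, Matrix.mulVec, dotProduct]
    rw [this]
    exact Finset.sum_nonneg fun j _ => mul_nonneg (hAk k i j) (hw j)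
  have hz0 : ∀ i, 0 ≤ z i := by
    intro i
    have : z i = ∑' k, F k i := tsum_apply hsum
    rw [this]
    exact tsum_nonneg fun k => hF0 k i
  have hrecur : z = w + A *ᵥ z := by
    set L : (Fin n → ℝ) →L[ℝ] (Fin n → ℝ) :=
      LinearMap.toContinuousLinearMap (Matrix.mulVecLin A) with hL
    have hmap : A *ᵥ z = ∑' k, A *ᵥ F k := by
      have := L.map_tsum hsum
      simpa [hL, Matrix.mulVecLin_apply] using this
    have hshift : ∀ k, F (k + 1) = A *ᵥ F k := by
      intro k
      rw [hF]
      simp only [pow_succ']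
      rw [← Matrix.mulVec_mulVec]
    calc z = F 0 + ∑' k, F (k + 1) := hsum.tsum_eq_zero_add
      _ = w + ∑' k, A *ᵥ F k := by
          congr 1
          · simp [hF, Matrix.one_mulVec]
          · exact tsum_congr fun k => hshift k
      _ = w + A *ᵥ z := by rw [hmap]
  refine ⟨z, hz0, fun i => ?_⟩
  have := congrFun hrecur i
  rw [this]
  simp [Matrix.mulVec, dotProduct, hA, Matrix.neg_apply]

lemma backward_dir {n : ℕ} (hn : 1 ≤ n) (G : Matrix (Fin n) (Fin n) ℝ)
    (hdiag : ∀ i, G i i = 0) (hcomp : ∀ i j, i ≠ j → G i j ≤ 0)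
    (heig : ∀ μ : ℂ, HasComplexEigenvalue G μ → ‖μ‖ < 1)
    (q : Fin n → ℝ) : ∃ x : Fin n → ℝ, NashEq G q x := by
  have hG : ∀ i j, G i j ≤ 0 := by
    intro i j
    rcases eq_or_ne i j with rfl | hij
    · exact le_of_eq (hdiag i)
    · exact hcomp i j hij
  set w : Fin n → ℝ := fun i => max 0 (q i) with hw
  obtain ⟨z, hz0, hzrec⟩ := exists_supersolution hn G hG heig w (fun i => le_max_left _ _)
  set T : (Fin n → ℝ) → (Fin n → ℝ) :=
    fun x i => max 0 (q i - ∑ j ∈ Finset.univ.erase i, G i j * x j) with hT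
  have hsum_erase : ∀ (i : Fin n) (x : Fin n → ℝ),
      ∑ j ∈ Finset.univ.erase i, G i j * x j = ∑ j, G i j * x j :=
    fun i x => Finset.sum_erase _ (by simp [hdiag i])
  have hneg : ∀ (i : Fin n) (x : Fin n → ℝ),
      q i - ∑ j ∈ Finset.univ.erase i, G i j * x j = q i + ∑ j, (-G i j) * x j := by
    intro i x
    rw [hsum_erase]
    have e : ∑ j, (-G i j) * x j = -∑ j, G i j * x j := by
      rw [← Finset.sum_neg_distrib]
      exact Finset.sum_congr rfl fun j _ => by ring
    rw [e]; ring
  have hmono : ∀ x y : Fin n → ℝ, x ≤ y → T x ≤ T y := by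
    intro x y hxy i
    refine max_le_max le_rfl ?_
    rw [hneg, hneg]
    refine add_le_add_right (Finset.sum_le_sum fun j _ => ?_) _
    exact mul_le_mul_of_nonneg_left (hxy j) (neg_nonneg.mpr (hG i j))
  have hT0 : ∀ (x : Fin n → ℝ) (i : Fin n), 0 ≤ T x i := fun x i => le_max_left _ _
  have hTz : ∀ x : Fin n → ℝ, x ≤ z → T x ≤ z := by
    intro x hx i
    refine le_trans (hmono x z hx i) ?_
    have : T z i = max 0 (q i + ∑ j, (-G i j) * z j) := by show max 0 _ = _; rw [hneg]
    rw [this]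
    have h2 : q i + ∑ j, (-G i j) * z j ≤ z i := by
      rw [hzrec i]
      exact add_le_add_left (le_max_right 0 (q i)) _
    exact max_le (hz0 i) h2
  haveI : Fact ((0 : Fin n → ℝ) ≤ z) := ⟨fun i => hz0 i⟩
  let Φ : Set.Icc (0 : Fin n → ℝ) z →o Set.Icc (0 : Fin n → ℝ) z :=
    ⟨fun p => ⟨T p.1, ⟨fun i => hT0 p.1 i, hTz p.1 p.2.2⟩⟩,
      fun p p' hpp' => hmono p.1 p'.1 hpp'⟩
  have hfix := Φ.map_lfp
  refine ⟨(Φ.lfp : Set.Icc (0 : Fin n → ℝ) z).1, fun i => ?_⟩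
  have := congrArg Subtype.val hfix
  exact (congrFun this i).symm

theorem exists_nash_iff_spectral_radius_lt_one (n : ℕ) (hn : 1 ≤ n)
    (G : Matrix (Fin n) (Fin n) ℝ) (hdiag : ∀ i, G i i = 0)
    (hcomp : ∀ i j, i ≠ j → G i j ≤ 0) :
    (∀ q : Fin n → ℝ, ∃ x : Fin n → ℝ, NashEq G q x) ↔
      (∀ μ : ℂ, HasComplexEigenvalue G μ → ‖μ‖ < 1) := by
  constructor
  · intro hex μ hμ
    exact forward_dir G hdiag hcomp hex μ hμ
  · intro heig q
    exact backward_dir hn G hdiag hcomp heig q
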